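/- Let A be the matrix algebra M_n(k) equipped with a good G-grading, i.e., a grading for which every matrix unit e_{ij} is homogeneous. Then A is graded symmetric, with the trace form tr(xy) providing the required non-degenerate associative symmetric bilinear form vanishing on A_σ × A_τ when στ ≠ e. -/

import Mathlib

/-- The degree-`g` component of the dual of a graded module:
`(M*)_g = { f | f(M_h) = 0 for all h ≠ g⁻¹ }`. -/
def dualComponent {k M : Type*} [Field k] [AddCommGroup M] [Module k M]
    {G : Type*} [Group G] (ℳ : G → Submodule k M) (g : G) :
    Submodule k (Module.Dual k M) where
  carrier := {f | ∀ h : G, h ≠ g⁻¹ → ∀ x ∈ ℳ h, f x = 0}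
  zero_mem' := by intro h hh x hx; rfl
  add_mem' := by
    intro f₁ f₂ h₁ h₂ h hh x hx
    simp [h₁ h hh x hx, h₂ h hh x hx]
  smul_mem' := by
    intro c f hf h hh x hx
    simp [hf h hh x hx]

/-- `A` is graded symmetric: `A ≅ A*` as graded `(A,A)`-bimodules, where the left
action on `A*` is `(a • f) y = f (y * a)`, the right action is `(f • a) y = f (a * y)`,
and `(A*)_g = { f | f(A_h) = 0 for h ≠ g⁻¹ }`. -/
def IsGradedSymmetric {k A : Type*} [Field k] [Ring A] [Algebra k A]
    {G : Type*} [Group G] (𝒜 : G → Submodule k A) : Prop :=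
  ∃ φ : A ≃ₗ[k] Module.Dual k A,
    (∀ a x y : A, φ (a * x) y = φ x (y * a)) ∧
    (∀ a x y : A, φ (x * a) y = φ x (a * y)) ∧
    ∀ g : G, ∀ x ∈ 𝒜 g, φ x ∈ dualComponent 𝒜 g

section Aux

variable {k : Type*} [Field k] {n : ℕ}

open Matrix

lemma trace_mul_stdBasis (x : Matrix (Fin n) (Fin n) k) (i j : Fin n) :
    (x * Matrix.single j i (1 : k)).trace = x i j := by
  have h : ∀ m : Fin n, (x * Matrix.single j i (1 : k)) m m
      = if m = i then x i j else 0 := by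
    intro m
    by_cases hm : m = i
    · rw [hm, Matrix.mul_single_apply_same]; simp
    · rw [Matrix.mul_single_apply_of_ne (1 : k) j i m m hm]; simp [hm]
  simp only [Matrix.trace, Matrix.diag]
  rw [Finset.sum_congr rfl fun m _ => h m]
  simp

lemma trace_stdBasis_mul (y : Matrix (Fin n) (Fin n) k) (i j : Fin n) :
    (Matrix.single j i (1 : k) * y).trace = y i j := by
  rw [Matrix.trace_mul_comm, trace_mul_stdBasis]

lemma stdBasis_mul_mul_stdBasis (w : Matrix (Fin n) (Fin n) k) (i : Fin n) :
    Matrix.single i i (1 : k) * w * Matrix.single i i (1 : k)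
      = w i i • Matrix.single i i (1 : k) := by
  ext a b
  by_cases ha : a = i
  · by_cases hb : b = i
    · rw [ha, hb, Matrix.mul_single_apply_same,
        Matrix.single_mul_apply_same]
      simp
    · rw [Matrix.mul_single_apply_of_ne (1 : k) i i a b hb]
      rw [Matrix.smul_apply, Matrix.single_apply_of_col_ne i a (Ne.symm hb) 1, smul_zero]
  · rw [mul_assoc, Matrix.single_mul_apply_of_ne (1 : k) i i a b ha]
    rw [Matrix.smul_apply, Matrix.single_apply_of_row_ne (Ne.symm ha) i b 1, smul_zero]

end Aux

/-- if `A = M_n(k)` carries a `G`-grading for which every matrix unit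
`e_{ij}` is homogeneous (a "good grading"), then `A` is graded symmetric, the trace
form `(x, y) ↦ tr(xy)` being a non-degenerate associative symmetric bilinear form
vanishing on `A_σ × A_τ` whenever `στ ≠ e`. -/
theorem matrix_goodGrading_gradedSymmetric
    {k : Type*} [Field k] {n : ℕ}
    {G : Type*} [Group G] [DecidableEq G]
    (𝒜 : G → Submodule k (Matrix (Fin n) (Fin n) k))
    (hinternal : DirectSum.IsInternal 𝒜)
    (hone : (1 : Matrix (Fin n) (Fin n) k) ∈ 𝒜 1)
    (hmul : ∀ {g h : G}, ∀ a ∈ 𝒜 g, ∀ b ∈ 𝒜 h, a * b ∈ 𝒜 (g * h))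
    (hgood : ∀ i j : Fin n, ∃ g : G, Matrix.single i j (1 : k) ∈ 𝒜 g) :
    IsGradedSymmetric 𝒜 ∧
    (∀ x : Matrix (Fin n) (Fin n) k,
      (∀ y : Matrix (Fin n) (Fin n) k, (x * y).trace = 0) → x = 0) ∧
    (∀ y : Matrix (Fin n) (Fin n) k,
      (∀ x : Matrix (Fin n) (Fin n) k, (x * y).trace = 0) → y = 0) ∧
    (∀ x y z : Matrix (Fin n) (Fin n) k, ((x * y) * z).trace = (x * (y * z)).trace) ∧
    (∀ x y : Matrix (Fin n) (Fin n) k, (x * y).trace = (y * x).trace) ∧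
    (∀ σ τ : G, σ * τ ≠ 1 →
      ∀ x ∈ 𝒜 σ, ∀ y ∈ 𝒜 τ, (x * y).trace = 0) := by

  classical
  -- disjointness of distinct components
  have hdisj : ∀ {a b : G}, a ≠ b → ∀ x, x ∈ 𝒜 a → x ∈ 𝒜 b → x = 0 := by
    intro a b hab x hxa hxb
    exact Submodule.disjoint_def.mp
      (hinternal.submodule_iSupIndep.pairwiseDisjoint hab)
      x hxa hxb
  -- key: elements of a nontrivial component have zero diagonal
  have hdiag : ∀ (σ : G), σ ≠ 1 → ∀ w ∈ 𝒜 σ, ∀ i : Fin n, w i i = 0 := by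
    intro σ hσ w hw i
    obtain ⟨g, hg⟩ := hgood i i
    -- g = 1 since e_ii is idempotent and nonzero
    have hEne : Matrix.single i i (1 : k) ≠ 0 := by
      intro h
      have := congrFun (congrFun h i) i
      simp at this
    have hEE : Matrix.single i i (1 : k) * Matrix.single i i (1 : k)
        = Matrix.single i i (1 : k) := by
      simpa using stdBasis_mul_mul_stdBasis (Matrix.single i i (1 : k)) i
    have hg2 : Matrix.single i i (1 : k) ∈ 𝒜 (g * g) := by
      have := hmul _ hg _ hg
      rwa [hEE] at this
    have hg1 : g = 1 := by
      by_contra hne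
      exact hEne (hdisj (show g ≠ g * g by
        intro h; exact hne (by
          have := mul_left_cancel (a := g) (b := (1 : G)) (c := g) (by simpa using h.symm)
          exact this.symm)) _ hg hg2)
    subst hg1
    -- e_ii * w * e_ii lies in 𝒜 σ and in 𝒜 1
    have h1 : Matrix.single i i (1 : k) * w * Matrix.single i i (1 : k)
        ∈ 𝒜 σ := by
      have := hmul _ (hmul _ hg _ hw) _ hg
      simpa using this
    have h2 : Matrix.single i i (1 : k) * w * Matrix.single i i (1 : k)
        ∈ 𝒜 1 := by
      rw [stdBasis_mul_mul_stdBasis]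
      exact Submodule.smul_mem _ _ hg
    have h0 := hdisj hσ _ h1 h2
    rw [stdBasis_mul_mul_stdBasis] at h0
    have := congrFun (congrFun h0 i) i
    simpa using this
  have htr0 : ∀ σ : G, σ ≠ 1 → ∀ w ∈ 𝒜 σ, w.trace = 0 := by
    intro σ hσ w hw
    simp only [Matrix.trace, Matrix.diag]
    exact Finset.sum_eq_zero fun i _ => hdiag σ hσ w hw i
  -- nondegeneracy
  have hndl : ∀ x : Matrix (Fin n) (Fin n) k,
      (∀ y : Matrix (Fin n) (Fin n) k, (x * y).trace = 0) → x = 0 := by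
    intro x hx
    ext i j
    have := hx (Matrix.single j i 1)
    rwa [trace_mul_stdBasis] at this
  have hndr : ∀ y : Matrix (Fin n) (Fin n) k,
      (∀ x : Matrix (Fin n) (Fin n) k, (x * y).trace = 0) → y = 0 := by
    intro y hy
    ext i j
    have := hy (Matrix.single j i 1)
    rwa [trace_stdBasis_mul] at this
  -- the trace form as a linear map to the dual
  let B : Matrix (Fin n) (Fin n) k →ₗ[k] Module.Dual k (Matrix (Fin n) (Fin n) k) :=
    LinearMap.mk₂ k (fun x y => (x * y).trace)
      (fun x x' y => by simp [add_mul])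
      (fun c x y => by simp [Matrix.smul_mul])
      (fun x y y' => by simp [mul_add])
      (fun c x y => by simp [Matrix.mul_smul])
  have hBinj : Function.Injective B := by
    rw [← LinearMap.ker_eq_bot]
    ext x
    simp only [LinearMap.mem_ker, Submodule.mem_bot]
    constructor
    · intro h
      exact hndl x fun y => by
        have := congrFun (congrArg DFunLike.coe h) y
        simpa [B] using this
    · rintro rfl; simp
  have hdim : Module.finrank k (Matrix (Fin n) (Fin n) k)
      = Module.finrank k (Module.Dual k (Matrix (Fin n) (Fin n) k)) :=
    (Subspace.dual_finrank_eq).symm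
  let φ := B.linearEquivOfInjective hBinj hdim
  have hφ : ∀ x y, φ x y = (x * y).trace := fun x y => by
    simp [φ, LinearMap.linearEquivOfInjective_apply, B]
  refine ⟨⟨φ, ?_, ?_, ?_⟩, hndl, hndr, fun x y z => by rw [mul_assoc],
    fun x y => Matrix.trace_mul_comm x y, ?_⟩
  · intro a x y
    rw [hφ, hφ, mul_assoc, Matrix.trace_mul_comm a (x * y), mul_assoc]
  · intro a x y
    rw [hφ, hφ, mul_assoc]
  · intro g x hx h hh y hy
    rw [hφ]
    have hgh : g * h ≠ 1 := fun hc => hh (eq_inv_of_mul_eq_one_right hc)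
    exact htr0 _ hgh _ (hmul _ hx _ hy)
  · intro σ τ hστ x hx y hy
    exact htr0 _ hστ _ (hmul _ hx _ hy)
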